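/- Let G be a finite simple undirected graph such that every 2-vertex-connected component (block) of G is bipartite or a triangle. Then G is sc-orientable. -/

import Mathlib

/-- An orientation of a simple graph `G`: each edge `{u,v}` receives exactly one
direction, yielding a directed graph with arc relation `arc`. -/
structure EdgeOrientation {V : Type*} (G : SimpleGraph V) where
  arc : V → V → Prop
  adj_iff : ∀ u v, G.Adj u v ↔ (arc u v ∨ arc v u)
  asymm : ∀ u v, arc u v → ¬ arc v u

/-- `p` is a directed path in the digraph `D`: a nonempty list of pairwise
distinct vertices in which consecutive vertices are joined by arcs of `D`. -/
def IsDipath {V : Type*} (D : V → V → Prop) (p : List V) : Prop :=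
  p ≠ [] ∧ p.Chain' D ∧ p.Nodup

/-- `p` is a directed path from `s` to `t` in the digraph `D`. -/
def IsDipathFromTo {V : Type*} (D : V → V → Prop) (s t : V) (p : List V) : Prop :=
  IsDipath D p ∧ p.head? = some s ∧ p.getLast? = some t

/-- A digraph `D` is singly connected if for every ordered pair `(s,t)` there is
at most one directed path from `s` to `t`. -/
def SinglyConnected {V : Type*} (D : V → V → Prop) : Prop :=
  ∀ s t p q, IsDipathFromTo D s t p → IsDipathFromTo D s t q → p = q

/-- An orientation is an sc-orientation if the resulting digraph is singly connected. -/
def IsSCOrientation {V : Type*} {G : SimpleGraph V} (σ : EdgeOrientation G) : Prop :=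
  SinglyConnected σ.arc

/-- A graph is sc-orientable if it admits an sc-orientation. -/
def SCOrientable {V : Type*} (G : SimpleGraph V) : Prop :=
  ∃ σ : EdgeOrientation G, IsSCOrientation σ

/-- A subgraph `H` of `G` is 2-vertex-connected: it is connected and remains
connected after the deletion of any single vertex. -/
def TwoVertexConnected {V : Type*} {G : SimpleGraph V} (H : G.Subgraph) : Prop :=
  H.Connected ∧ ∀ v ∈ H.verts, (H.deleteVerts {v}).Connected

/-- A block of `G`: a maximal 2-vertex-connected subgraph of `G`. -/
def IsBlock {V : Type*} {G : SimpleGraph V} (H : G.Subgraph) : Prop :=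
  TwoVertexConnected H ∧ ∀ K : G.Subgraph, TwoVertexConnected K → H ≤ K → K = H

/-- The subgraph `H` is a triangle: its vertex set consists of three distinct
mutually adjacent vertices. -/
def IsTriangleSubgraph {V : Type*} {G : SimpleGraph V} (H : G.Subgraph) : Prop :=
  ∃ a b c : V, a ≠ b ∧ a ≠ c ∧ b ≠ c ∧ H.verts = {a, b, c} ∧
    H.Adj a b ∧ H.Adj b c ∧ H.Adj a c

section Basic
variable {V : Type*} {D : V → V → Prop}

lemma mem_of_getLast?_eq {l : List V} {a : V} (h : l.getLast? = some a) : a ∈ l := by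
  obtain ⟨h', rfl⟩ := List.mem_getLast?_eq_getLast (Option.mem_def.2 h)
  exact List.getLast_mem h'

lemma eq_singleton_of_head_last {l : List V} {x : V} (hnd : l.Nodup)
    (hh : l.head? = some x) (hl : l.getLast? = some x) : l = [x] := by
  cases l with
  | nil => simp at hh
  | cons a l' =>
    simp only [List.head?_cons, Option.some.injEq] at hh
    obtain rfl := hh
    cases l' with
    | nil => rfl
    | cons b l'' =>
      rw [List.getLast?_cons_cons] at hl
      have : a ∈ b :: l'' := mem_of_getLast?_eq hl
      simp only [List.nodup_cons] at hnd
      exact absurd this hnd.1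

lemma dipath_self {s : V} {p : List V} (h : IsDipathFromTo D s s p) : p = [s] :=
  eq_singleton_of_head_last h.1.2.2 h.2.1 h.2.2

lemma chain'_head_rel {R : V → V → Prop} {y : V} {l : List V}
    (h : (y :: l).Chain' R) (hl : l ≠ []) : ∃ w, R y w := by
  cases l with
  | nil => exact absurd rfl hl
  | cons z r => exact ⟨z, (List.isChain_cons_cons.1 h).1⟩

lemma chain'_last_rel {R : V → V → Prop} : ∀ {l : List V} {t : V},
    l.Chain' R → l.getLast? = some t → 2 ≤ l.length → ∃ w, R w t := by
  intro l
  induction l with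
  | nil => intro t _ _ h2; simp at h2
  | cons x l' ih =>
    intro t hc hl h2
    cases l' with
    | nil => simp at h2
    | cons y r =>
      rw [List.getLast?_cons_cons] at hl
      rcases r with _ | ⟨z, r'⟩
      · simp only [List.getLast?_singleton, Option.some.injEq] at hl
        subst hl
        exact ⟨x, (List.isChain_cons_cons.1 hc).1⟩
      · exact ih (List.isChain_cons_cons.1 hc).2 hl (by simp)

lemma sc_of_no_two (h : ∀ a b c, D a b → D b c → False) : SinglyConnected D := by
  have key : ∀ s t p, s ≠ t → IsDipathFromTo D s t p → p = [s, t] := by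
    rintro s t p hst ⟨⟨hne, hch, hnd⟩, hh, hl⟩
    cases p with
    | nil => exact absurd rfl hne
    | cons x p' =>
      simp only [List.head?_cons, Option.some.injEq] at hh; obtain rfl := hh.symm
      cases p' with
      | nil =>
        simp only [List.getLast?_singleton, Option.some.injEq] at hl
        exact absurd hl hst
      | cons y r =>
        cases r with
        | nil =>
          rw [List.getLast?_cons_cons, List.getLast?_singleton] at hl
          simp only [Option.some.injEq] at hl; subst hl; rfl
        | cons z r' =>
          exact absurd ((List.isChain_cons_cons.1 (List.isChain_cons_cons.1 hch).2).1)
            (fun h2 => h _ _ _ (List.isChain_cons_cons.1 hch).1 h2)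
  intro s t p q hp hq
  by_cases hst : s = t
  · subst hst; rw [dipath_self hp, dipath_self hq]
  · rw [key s t p hst hp, key s t q hst hq]

lemma sc_of_functional (h : ∀ a b c, D a b → D a c → b = c) : SinglyConnected D := by
  intro s t p
  induction p generalizing s with
  | nil => rintro q ⟨⟨hne, _, _⟩, _, _⟩ _; exact absurd rfl hne
  | cons x p' ih =>
    rintro q hp hq
    obtain ⟨⟨hne, hch, hnd⟩, hh, hl⟩ := hp
    simp only [List.head?_cons, Option.some.injEq] at hh; obtain rfl := hh.symm
    cases p' with
    | nil =>
      simp only [List.getLast?_singleton, Option.some.injEq] at hl; subst hl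
      exact (dipath_self hq).symm
    | cons y r =>
      have hst : s ≠ t := by
        intro hst; subst hst
        have := dipath_self ⟨⟨hne, hch, hnd⟩, rfl, hl⟩
        simp at this
      cases q with
      | nil => exact absurd rfl hq.1.1
      | cons z q' =>
        obtain ⟨⟨hneq, hchq, hndq⟩, hhq, hlq⟩ := hq
        simp only [List.head?_cons, Option.some.injEq] at hhq; obtain rfl := hhq.symm
        cases q' with
        | nil =>
          simp only [List.getLast?_singleton, Option.some.injEq] at hlq
          exact absurd hlq hst
        | cons w r' =>
          have hyw : y = w := h s y w (List.isChain_cons_cons.1 hch).1 (List.isChain_cons_cons.1 hchq).1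
          subst hyw
          have := ih (s := y) ⟨⟨List.cons_ne_nil _ _, (List.isChain_cons_cons.1 hch).2, hnd.of_cons⟩,
            rfl, by rw [← List.getLast?_cons_cons (a := s)]; exact hl⟩
            (q := y :: r') ⟨⟨List.cons_ne_nil _ _, (List.isChain_cons_cons.1 hchq).2, hndq.of_cons⟩,
            rfl, by rw [← List.getLast?_cons_cons (a := s)]; exact hlq⟩
          rw [this]
  end Basic
section Glue
variable {V : Type*} {D₁ D₂ : V → V → Prop} {c : V}

/-- support of a digraph -/
def InSupp (D : V → V → Prop) (x : V) : Prop := ∃ y, D x y ∨ D y x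

lemma chain_decomp
    (hmix : ∀ x, InSupp D₁ x → InSupp D₂ x → x = c) :
    ∀ p : List V, p.Chain' (fun x y => D₁ x y ∨ D₂ x y) → p.Nodup →
    p.Chain' D₁ ∨ p.Chain' D₂ ∨
    (∃ p₁ p₂, p = p₁ ++ c :: p₂ ∧ p₁ ≠ [] ∧ p₂ ≠ [] ∧
      (p₁ ++ [c]).Chain' D₁ ∧ (c :: p₂).Chain' D₂) ∨
    (∃ p₁ p₂, p = p₁ ++ c :: p₂ ∧ p₁ ≠ [] ∧ p₂ ≠ [] ∧
      (p₁ ++ [c]).Chain' D₂ ∧ (c :: p₂).Chain' D₁) := by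
  intro p
  induction p with
  | nil => intro _ _; exact Or.inl (by simp [List.Chain'])
  | cons x p' ih =>
    intro hch hnd
    cases p' with
    | nil => exact Or.inl (by simp [List.Chain'])
    | cons y r =>
      obtain ⟨hxy, hch'⟩ := List.isChain_cons_cons.1 hch
      have hnd' : (y :: r).Nodup := hnd.of_cons
      have hxmem : x ∉ y :: r := (List.nodup_cons.1 hnd).1
      rcases ih hch' hnd' with h1 | h2 | h3 | h4
      · -- tail is D₁-chain
        rcases hxy with hx1 | hx2
        · exact Or.inl (List.isChain_cons_cons.2 ⟨hx1, h1⟩)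
        · -- first arc D₂, rest D₁
          cases r with
          | nil => exact Or.inr (Or.inl (by simpa [List.Chain'] using hx2))
          | cons z r' =>
            have hy1 : InSupp D₁ y := ⟨z, Or.inl (List.isChain_cons_cons.1 h1).1⟩
            have hy2 : InSupp D₂ y := ⟨x, Or.inr hx2⟩
            have hyc : y = c := hmix y hy1 hy2
            subst hyc
            exact Or.inr (Or.inr (Or.inr ⟨[x], z :: r', rfl, by simp, by simp,
              by simpa [List.Chain'] using hx2, h1⟩))
      · rcases hxy with hx1 | hx2
        · cases r with
          | nil => exact Or.inl (by simpa [List.Chain'] using hx1)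
          | cons z r' =>
            have hy2 : InSupp D₂ y := ⟨z, Or.inl (List.isChain_cons_cons.1 h2).1⟩
            have hy1 : InSupp D₁ y := ⟨x, Or.inr hx1⟩
            have hyc : y = c := hmix y hy1 hy2
            subst hyc
            exact Or.inr (Or.inr (Or.inl ⟨[x], z :: r', rfl, by simp, by simp,
              by simpa [List.Chain'] using hx1, h2⟩))
        · exact Or.inr (Or.inl (List.isChain_cons_cons.2 ⟨hx2, h2⟩))
      · -- tail splits D₁ then D₂
        obtain ⟨q₁, q₂, heq, hq₁, hq₂, hc1, hc2⟩ := h3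
        obtain ⟨y', q₁', rfl⟩ := List.exists_cons_of_ne_nil hq₁
        have hy' : y' = y := by
          have := congrArg List.head? heq
          simpa using this.symm
        obtain rfl := hy'.symm
        rcases hxy with hx1 | hx2
        · refine Or.inr (Or.inr (Or.inl ⟨x :: y :: q₁', q₂, by rw [heq]; rfl, by simp, hq₂,
            ?_, hc2⟩))
          exact List.isChain_cons_cons.2 ⟨hx1, hc1⟩
        · -- first arc D₂ but q₁-part is D₁ : y in both supports ⇒ y = c, contradiction with nodup
          exfalso
          have hy1 : InSupp D₁ y := by
            have : q₁' ++ [c] ≠ [] := by simp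
            obtain ⟨w, hw⟩ := chain'_head_rel (l := q₁' ++ [c]) (by simpa using hc1) this
            exact ⟨w, Or.inl hw⟩
          have hyc : y = c := hmix y hy1 ⟨x, Or.inr hx2⟩
          have hr : r = q₁' ++ c :: q₂ := by simpa using congrArg List.tail heq
          have hcr : c ∈ r := by rw [hr]; simp
          exact (List.nodup_cons.1 hnd').1 (hyc ▸ hcr)
      · obtain ⟨q₁, q₂, heq, hq₁, hq₂, hc1, hc2⟩ := h4
        obtain ⟨y', q₁', rfl⟩ := List.exists_cons_of_ne_nil hq₁
        have hy' : y' = y := by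
          have := congrArg List.head? heq
          simpa using this.symm
        obtain rfl := hy'.symm
        rcases hxy with hx1 | hx2
        · exfalso
          have hy2 : InSupp D₂ y := by
            obtain ⟨w, hw⟩ := chain'_head_rel (l := q₁' ++ [c]) (by simpa using hc1) (by simp)
            exact ⟨w, Or.inl hw⟩
          have hyc : y = c := hmix y ⟨x, Or.inr hx1⟩ hy2
          have hr : r = q₁' ++ c :: q₂ := by simpa using congrArg List.tail heq
          have hcr : c ∈ r := by rw [hr]; simp
          exact (List.nodup_cons.1 hnd').1 (hyc ▸ hcr)
        · refine Or.inr (Or.inr (Or.inr ⟨x :: y :: q₁', q₂, by rw [heq]; rfl, by simp, hq₂,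
            List.isChain_cons_cons.2 ⟨hx2, hc1⟩, hc2⟩))
end Glue
section Glue2
variable {V : Type*} {D₁ D₂ : V → V → Prop} {c s t : V}

lemma supp_of_dipath {D : V → V → Prop} {p : List V}
    (h : IsDipathFromTo D s t p) (hst : s ≠ t) : InSupp D s ∧ InSupp D t := by
  obtain ⟨⟨hne, hch, hnd⟩, hh, hl⟩ := h
  cases p with
  | nil => exact absurd rfl hne
  | cons x p' =>
    simp only [List.head?_cons, Option.some.injEq] at hh; obtain rfl := hh.symm
    cases p' with
    | nil =>
      simp only [List.getLast?_singleton, Option.some.injEq] at hl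
      exact absurd hl hst
    | cons y r =>
      refine ⟨⟨y, Or.inl (List.isChain_cons_cons.1 hch).1⟩, ?_⟩
      obtain ⟨w, hw⟩ := chain'_last_rel hch hl (by simp)
      exact ⟨w, Or.inr hw⟩

lemma head?_append_left {l₁ l₂ : List V} (h : l₁ ≠ []) : (l₁ ++ l₂).head? = l₁.head? := by
  cases l₁ with
  | nil => exact absurd rfl h
  | cons a l => simp

lemma mem_of_head?_eq {l : List V} {a : V} (h : l.head? = some a) : a ∈ l := by
  cases l with
  | nil => simp at h
  | cons x l' => simp only [List.head?_cons, Option.some.injEq] at h; exact h ▸ List.mem_cons_self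

lemma split_facts {Da Db : V → V → Prop} {r₁ r₂ : List V}
    (hnd : (r₁ ++ c :: r₂).Nodup) (hh : (r₁ ++ c :: r₂).head? = some s)
    (hl : (r₁ ++ c :: r₂).getLast? = some t)
    (hr₁ : r₁ ≠ []) (hr₂ : r₂ ≠ [])
    (hc1 : (r₁ ++ [c]).Chain' Da) (hc2 : (c :: r₂).Chain' Db) :
    IsDipathFromTo Da s c (r₁ ++ [c]) ∧ IsDipathFromTo Db c t (c :: r₂) ∧ s ≠ c ∧ t ≠ c := by
  have hsub1 : (r₁ ++ [c]).Sublist (r₁ ++ c :: r₂) :=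
    List.Sublist.append_left (List.cons_sublist_cons.2 (List.nil_sublist r₂)) r₁
  have hnd1 : (r₁ ++ [c]).Nodup := hnd.sublist hsub1
  have hnd2 : (c :: r₂).Nodup := hnd.sublist (List.sublist_append_right r₁ (c :: r₂))
  have hh1 : (r₁ ++ [c]).head? = some s := by
    rw [head?_append_left hr₁]; rw [head?_append_left hr₁] at hh; exact hh
  have hl1 : (r₁ ++ [c]).getLast? = some c := by
    rw [List.getLast?_append_of_ne_nil _ (by simp : ([c] : List V) ≠ [])]; rfl
  have hl2 : (c :: r₂).getLast? = some t := by
    rw [← List.getLast?_append_of_ne_nil r₁ (by simp : (c :: r₂) ≠ [])]; exact hl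
  have hsc : s ≠ c := by
    intro h; subst h
    have hs₁ : s ∈ r₁ := mem_of_head?_eq (by rw [head?_append_left hr₁] at hh; exact hh)
    have : s ∉ r₁ := by
      have := List.disjoint_of_nodup_append hnd1
      intro hmem; exact this hmem (by simp)
    exact this hs₁
  have htc : t ≠ c := by
    intro h; subst h
    have := eq_singleton_of_head_last hnd2 rfl hl2
    simp only [List.cons.injEq] at this
    exact hr₂ this.2
  exact ⟨⟨⟨by simp, hc1, hnd1⟩, hh1, hl1⟩, ⟨⟨by simp, hc2, hnd2⟩, rfl, hl2⟩, hsc, htc⟩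

lemma glue_sc (h₁ : SinglyConnected D₁) (h₂ : SinglyConnected D₂)
    (hmix : ∀ x, InSupp D₁ x → InSupp D₂ x → x = c) :
    SinglyConnected (fun x y => D₁ x y ∨ D₂ x y) := by
  intro s t p q hp hq
  by_cases hst : s = t
  · subst hst; rw [dipath_self hp, dipath_self hq]
  have classify : ∀ r : List V, IsDipathFromTo (fun x y => D₁ x y ∨ D₂ x y) s t r →
      (IsDipathFromTo D₁ s t r) ∨ (IsDipathFromTo D₂ s t r) ∨
      (∃ r₁ r₂, r = r₁ ++ c :: r₂ ∧ IsDipathFromTo D₁ s c (r₁ ++ [c]) ∧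
        IsDipathFromTo D₂ c t (c :: r₂) ∧ s ≠ c ∧ t ≠ c) ∨
      (∃ r₁ r₂, r = r₁ ++ c :: r₂ ∧ IsDipathFromTo D₂ s c (r₁ ++ [c]) ∧
        IsDipathFromTo D₁ c t (c :: r₂) ∧ s ≠ c ∧ t ≠ c) := by
    rintro r ⟨⟨hne, hch, hnd⟩, hh, hl⟩
    rcases chain_decomp hmix r hch hnd with h1 | h2 | h3 | h4
    · exact Or.inl ⟨⟨hne, h1, hnd⟩, hh, hl⟩
    · exact Or.inr (Or.inl ⟨⟨hne, h2, hnd⟩, hh, hl⟩)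
    · obtain ⟨r₁, r₂, rfl, hr₁, hr₂, hc1, hc2⟩ := h3
      obtain ⟨a1, a2, a3, a4⟩ := split_facts hnd hh hl hr₁ hr₂ hc1 hc2
      exact Or.inr (Or.inr (Or.inl ⟨r₁, r₂, rfl, a1, a2, a3, a4⟩))
    · obtain ⟨r₁, r₂, rfl, hr₁, hr₂, hc1, hc2⟩ := h4
      obtain ⟨a1, a2, a3, a4⟩ := split_facts hnd hh hl hr₁ hr₂ hc1 hc2
      exact Or.inr (Or.inr (Or.inr ⟨r₁, r₂, rfl, a1, a2, a3, a4⟩))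
  rcases classify p hp with P1 | P2 | P3 | P4 <;> rcases classify q hq with Q1 | Q2 | Q3 | Q4
  · exact h₁ s t p q P1 Q1
  · -- D₁ path and D₂ path
    exfalso
    obtain ⟨hs1, ht1⟩ := supp_of_dipath P1 hst
    obtain ⟨hs2, ht2⟩ := supp_of_dipath Q2 hst
    exact hst ((hmix s hs1 hs2).trans (hmix t ht1 ht2).symm)
  · exfalso
    obtain ⟨_, ht1⟩ := supp_of_dipath P1 hst
    obtain ⟨q₁, q₂, _, _, hq2, _, htc⟩ := Q3
    obtain ⟨_, ht2⟩ := supp_of_dipath hq2 (Ne.symm htc)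
    exact htc (hmix t ht1 ht2)
  · exfalso
    obtain ⟨hs1, _⟩ := supp_of_dipath P1 hst
    obtain ⟨q₁, q₂, _, hq1, _, hsc, _⟩ := Q4
    obtain ⟨hs2, _⟩ := supp_of_dipath hq1 hsc
    exact hsc (hmix s hs1 hs2)
  · exfalso
    obtain ⟨hs2, ht2⟩ := supp_of_dipath P2 hst
    obtain ⟨hs1, ht1⟩ := supp_of_dipath Q1 hst
    exact hst ((hmix s hs1 hs2).trans (hmix t ht1 ht2).symm)
  · exact h₂ s t p q P2 Q2
  · exfalso
    obtain ⟨hs2, _⟩ := supp_of_dipath P2 hst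
    obtain ⟨q₁, q₂, _, hq1, _, hsc, _⟩ := Q3
    obtain ⟨hs1, _⟩ := supp_of_dipath hq1 hsc
    exact hsc (hmix s hs1 hs2)
  · exfalso
    obtain ⟨_, ht2⟩ := supp_of_dipath P2 hst
    obtain ⟨q₁, q₂, _, _, hq2, _, htc⟩ := Q4
    obtain ⟨_, ht1⟩ := supp_of_dipath hq2 (Ne.symm htc)
    exact htc (hmix t ht1 ht2)
  · exfalso
    obtain ⟨_, ht1⟩ := supp_of_dipath Q1 hst
    obtain ⟨p₁, p₂, _, _, hp2, _, htc⟩ := P3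
    obtain ⟨_, ht2⟩ := supp_of_dipath hp2 (Ne.symm htc)
    exact htc (hmix t ht1 ht2)
  · exfalso
    obtain ⟨hs2, _⟩ := supp_of_dipath Q2 hst
    obtain ⟨p₁, p₂, _, hp1, _, hsc, _⟩ := P3
    obtain ⟨hs1, _⟩ := supp_of_dipath hp1 hsc
    exact hsc (hmix s hs1 hs2)
  · -- both split type 3
    obtain ⟨p₁, p₂, rfl, hp1, hp2, _, _⟩ := P3
    obtain ⟨q₁, q₂, rfl, hq1, hq2, _, _⟩ := Q3
    have e1 : p₁ ++ [c] = q₁ ++ [c] := h₁ s c _ _ hp1 hq1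
    have e2 : c :: p₂ = c :: q₂ := h₂ c t _ _ hp2 hq2
    rw [List.append_cancel_right e1]
    simp only [List.cons.injEq] at e2
    rw [e2.2]
  · exfalso
    obtain ⟨p₁, p₂, _, hp1, _, hsc, _⟩ := P3
    obtain ⟨q₁, q₂, _, hq1, _, _, _⟩ := Q4
    obtain ⟨hs1, _⟩ := supp_of_dipath hp1 hsc
    obtain ⟨hs2, _⟩ := supp_of_dipath hq1 hsc
    exact hsc (hmix s hs1 hs2)
  · exfalso
    obtain ⟨hs1, _⟩ := supp_of_dipath Q1 hst
    obtain ⟨p₁, p₂, _, hp1, _, hsc, _⟩ := P4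
    obtain ⟨hs2, _⟩ := supp_of_dipath hp1 hsc
    exact hsc (hmix s hs1 hs2)
  · exfalso
    obtain ⟨_, ht2⟩ := supp_of_dipath Q2 hst
    obtain ⟨p₁, p₂, _, _, hp2, _, htc⟩ := P4
    obtain ⟨_, ht1⟩ := supp_of_dipath hp2 (Ne.symm htc)
    exact htc (hmix t ht1 ht2)
  · exfalso
    obtain ⟨p₁, p₂, _, hp1, _, hsc, _⟩ := P4
    obtain ⟨q₁, q₂, _, hq1, _, _, _⟩ := Q3
    obtain ⟨hs2, _⟩ := supp_of_dipath hp1 hsc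
    obtain ⟨hs1, _⟩ := supp_of_dipath hq1 hsc
    exact hsc (hmix s hs1 hs2)
  · obtain ⟨p₁, p₂, rfl, hp1, hp2, _, _⟩ := P4
    obtain ⟨q₁, q₂, rfl, hq1, hq2, _, _⟩ := Q4
    have e1 : p₁ ++ [c] = q₁ ++ [c] := h₂ s c _ _ hp1 hq1
    have e2 : c :: p₂ = c :: q₂ := h₁ c t _ _ hp2 hq2
    rw [List.append_cancel_right e1]
    simp only [List.cons.injEq] at e2
    rw [e2.2]
end Glue2
section GraphLemmas
variable {V : Type*}

lemma sc_of_edgeless (G : SimpleGraph V) (h : ∀ x y, ¬ G.Adj x y) : SCOrientable G := by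
  refine ⟨⟨fun _ _ => False, fun u v => by simp [h u v], fun _ _ hf => hf.elim⟩, ?_⟩
  exact sc_of_no_two (fun _ _ _ hf => hf.elim)

lemma sc_of_twoColoring (G : SimpleGraph V) (f : V → Bool)
    (hf : ∀ x y, G.Adj x y → f x ≠ f y) : SCOrientable G := by
  refine ⟨⟨fun x y => G.Adj x y ∧ f x = false ∧ f y = true, ?_, ?_⟩, ?_⟩
  · intro u v
    constructor
    · intro h
      have hne := hf u v h
      cases hu : f u <;> cases hv : f v
      · simp [hu, hv] at hne
      · exact Or.inl ⟨h, by simp [hu], by simp [hv]⟩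
      · exact Or.inr ⟨h.symm, by simp [hv], by simp [hu]⟩
      · simp [hu, hv] at hne
    · rintro (⟨h, _⟩ | ⟨h, _⟩); exact h; exact h.symm
  · rintro u v ⟨_, hu, _⟩ ⟨_, _, hu'⟩
    rw [hu] at hu'; exact Bool.noConfusion hu'
  · refine sc_of_no_two (fun a b cc h h' => ?_)
    obtain ⟨_, _, hb⟩ := h
    obtain ⟨_, hb', _⟩ := h'
    rw [hb] at hb'; exact Bool.noConfusion hb'

lemma sc_of_triangleLike (G : SimpleGraph V) (a b c : V)
    (hab : a ≠ b) (hac : a ≠ c) (hbc : b ≠ c)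
    (hcov : ∀ x y, G.Adj x y → x ∈ ({a, b, c} : Set V)) : SCOrientable G := by
  classical
  refine ⟨⟨fun x y => G.Adj x y ∧ ((x = a ∧ y = b) ∨ (x = b ∧ y = c) ∨ (x = c ∧ y = a)),
      ?_, ?_⟩, ?_⟩
  · intro u v
    constructor
    · intro h
      have hu := hcov u v h
      have hv := hcov v u h.symm
      have hne := h.ne
      simp only [Set.mem_insert_iff, Set.mem_singleton_iff] at hu hv
      rcases hu with rfl | rfl | rfl <;> rcases hv with rfl | rfl | rfl
      · exact absurd rfl hne
      · exact Or.inl ⟨h, Or.inl ⟨rfl, rfl⟩⟩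
      · exact Or.inr ⟨h.symm, Or.inr (Or.inr ⟨rfl, rfl⟩)⟩
      · exact Or.inr ⟨h.symm, Or.inl ⟨rfl, rfl⟩⟩
      · exact absurd rfl hne
      · exact Or.inl ⟨h, Or.inr (Or.inl ⟨rfl, rfl⟩)⟩
      · exact Or.inl ⟨h, Or.inr (Or.inr ⟨rfl, rfl⟩)⟩
      · exact Or.inr ⟨h.symm, Or.inr (Or.inl ⟨rfl, rfl⟩)⟩
      · exact absurd rfl hne
    · rintro (⟨h, _⟩ | ⟨h, _⟩); exact h; exact h.symm
  · rintro u v ⟨_, h1⟩ ⟨_, h2⟩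
    obtain ⟨rfl, rfl⟩ | ⟨rfl, rfl⟩ | ⟨rfl, rfl⟩ := h1 <;>
      rcases h2 with ⟨h3, h4⟩ | ⟨h3, h4⟩ | ⟨h3, h4⟩ <;>
        first
          | exact hab h3.symm | exact hac h4 | exact hbc h3
          | exact hac h3.symm | exact hbc h3.symm | exact hab h4.symm
          | exact hbc h4.symm | exact hab h3 | exact hac h3
  · refine sc_of_functional (fun x y z h1 h2 => ?_)
    obtain ⟨_, h1⟩ := h1
    obtain ⟨_, h2⟩ := h2
    obtain ⟨rfl, rfl⟩ | ⟨rfl, rfl⟩ | ⟨rfl, rfl⟩ := h1 <;>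
      rcases h2 with ⟨h3, h4⟩ | ⟨h3, h4⟩ | ⟨h3, h4⟩ <;>
        first
          | exact h4.symm
          | exact absurd h3 hab | exact absurd h3 hac | exact absurd h3 hbc
          | exact absurd h3.symm hab | exact absurd h3.symm hac | exact absurd h3.symm hbc
end GraphLemmas
section SubgraphMachinery
variable {V : Type*} {G : SimpleGraph V}

/-- the subgraph spanned by all edges of `G` -/
def suppSubgraph (G : SimpleGraph V) : G.Subgraph where
  verts := {x | ∃ y, G.Adj x y}
  Adj := G.Adj
  adj_sub := id
  edge_vert := fun {v w} h => ⟨w, h⟩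
  symm := ⟨fun _ _ h => h.symm⟩

lemma reach_pred {α : Type*} {W : SimpleGraph α} (P : α → Prop)
    (h : ∀ x y, W.Adj x y → (P x ↔ P y)) {x y : α} (hr : W.Reachable x y) : P x ↔ P y := by
  obtain ⟨w⟩ := hr
  induction w with
  | nil => exact Iff.rfl
  | cons ha _ ih => exact (h _ _ ha).trans ih

lemma adj_of_reachable_ne {α : Type*} {W : SimpleGraph α} {x y : α}
    (hr : W.Reachable x y) (hxy : x ≠ y) : ∃ z, W.Adj x z := by
  obtain ⟨w⟩ := hr
  cases w with
  | nil => exact absurd rfl hxy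
  | cons ha _ => exact ⟨_, ha⟩

lemma twoVC_exists_edge {K : G.Subgraph} (h : TwoVertexConnected K) : ∃ x y, K.Adj x y := by
  obtain ⟨v, hv⟩ := h.1.nonempty
  obtain ⟨w, hw⟩ := (h.2 v hv).nonempty
  rw [SimpleGraph.Subgraph.deleteVerts_verts] at hw
  have hwv : w ≠ v := by simpa using hw.2
  have hr : K.coe.Reachable ⟨w, hw.1⟩ ⟨v, hv⟩ := h.1.coe.preconnected _ _
  obtain ⟨z, hz⟩ := adj_of_reachable_ne hr (by simp [Subtype.ext_iff, hwv])
  exact ⟨w, z, hz⟩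

lemma isBlock_suppSubgraph (h : TwoVertexConnected (suppSubgraph G)) :
    IsBlock (suppSubgraph G) := by
  refine ⟨h, fun K hK hle => ?_⟩
  have hverts : K.verts = (suppSubgraph G).verts := by
    apply Set.eq_of_subset_of_subset
    · intro u hu
      by_contra hu'
      obtain ⟨x, y, hxy⟩ := twoVC_exists_edge hK
      have hx : x ∈ (suppSubgraph G).verts := ⟨y, K.adj_sub hxy⟩
      have hux : u ≠ x := fun h' => hu' (h' ▸ hx)
      have hr : K.coe.Reachable ⟨u, hu⟩ ⟨x, K.edge_vert hxy⟩ := hK.1.coe.preconnected _ _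
      obtain ⟨z, hz⟩ := adj_of_reachable_ne hr (by simp [Subtype.ext_iff, hux])
      exact hu' ⟨z, K.adj_sub hz⟩
    · exact hle.1
  refine SimpleGraph.Subgraph.ext hverts ?_
  funext x y
  exact propext ⟨fun hk => K.adj_sub hk, fun hg => hle.2 hg⟩

lemma sc_of_suppSubgraph_2vc (h2 : TwoVertexConnected (suppSubgraph G))
    (hb : (suppSubgraph G).coe.Colorable 2 ∨ IsTriangleSubgraph (suppSubgraph G)) :
    SCOrientable G := by
  classical
  rcases hb with hcol | htri
  · obtain ⟨C⟩ := hcol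
    refine sc_of_twoColoring G
      (fun x => if h : x ∈ (suppSubgraph G).verts then decide (C ⟨x, h⟩ = 1) else false) ?_
    intro x y hadj
    have hx : x ∈ (suppSubgraph G).verts := ⟨y, hadj⟩
    have hy : y ∈ (suppSubgraph G).verts := ⟨x, hadj.symm⟩
    have hC : C ⟨x, hx⟩ ≠ C ⟨y, hy⟩ := C.valid hadj
    simp only [hx, hy, dif_pos]
    have h01 : ∀ i : Fin 2, i = 0 ∨ i = 1 := by decide
    rcases h01 (C ⟨x, hx⟩) with h1 | h1 <;> rcases h01 (C ⟨y, hy⟩) with h2 | h2 <;>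
      simp [h1, h2] at hC ⊢
  · obtain ⟨a, b, c, hab, hac, hbc, hverts, _, _, _⟩ := htri
    refine sc_of_triangleLike G a b c hab hac hbc ?_
    intro x y hadj
    have : x ∈ (suppSubgraph G).verts := ⟨y, hadj⟩
    rw [hverts] at this
    exact this
end SubgraphMachinery
section Restrict
variable {V : Type*} (G : SimpleGraph V)

/-- the graph `G` restricted to edges inside `A` -/
def restrictG (A : Set V) : SimpleGraph V where
  Adj x y := G.Adj x y ∧ x ∈ A ∧ y ∈ A
  symm := ⟨fun _ _ ⟨h, hx, hy⟩ => ⟨h.symm, hy, hx⟩⟩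
  loopless := ⟨fun x ⟨h, _, _⟩ => h.ne rfl⟩

variable {G}

lemma blocks_restrict {A : Set V} {c₀ : V} (hc₀A : c₀ ∈ A)
    (hA : ∀ x y, G.Adj x y → x ≠ c₀ → y ≠ c₀ → (x ∈ A ↔ y ∈ A))
    (hblocks : ∀ H : G.Subgraph, IsBlock H → (H.coe.Colorable 2 ∨ IsTriangleSubgraph H)) :
    ∀ B : (restrictG G A).Subgraph, IsBlock B →
      (B.coe.Colorable 2 ∨ IsTriangleSubgraph B) := by
  intro B hB
  set B' : G.Subgraph := ⟨B.verts, B.Adj, fun h => (B.adj_sub h).1, B.edge_vert, B.symm⟩ with hB'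
  have hcoe : B'.coe = B.coe := rfl
  have h2vc' : TwoVertexConnected B' := by
    obtain ⟨h1, h2⟩ := hB.1
    constructor
    · rw [SimpleGraph.Subgraph.connected_iff'] at h1 ⊢
      exact h1
    · intro v hv
      have := h2 v hv
      rw [SimpleGraph.Subgraph.connected_iff'] at this ⊢
      exact this
  -- B has an edge, pick an endpoint in A distinct from c₀
  obtain ⟨p, q, hpq⟩ := twoVC_exists_edge hB.1
  have hpq' := B.adj_sub hpq
  have hpqne : p ≠ q := hpq'.1.ne
  obtain ⟨z₀, hz₀A, hz₀c, hz₀B⟩ : ∃ z₀, z₀ ∈ A ∧ z₀ ≠ c₀ ∧ z₀ ∈ B.verts := by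
    by_cases hp : p = c₀
    · exact ⟨q, hpq'.2.2, fun h => hpqne (hp.trans h.symm), B.edge_vert hpq.symm⟩
    · exact ⟨p, hpq'.2.1, hp, B.edge_vert hpq⟩
  have hBblock : IsBlock B' := by
    refine ⟨h2vc', fun K hK hle => ?_⟩
    -- K.verts ⊆ A
    have hKA : K.verts ⊆ A := by
      intro u hu
      by_cases huc : u = c₀
      · exact huc ▸ hc₀A
      by_cases hcK : c₀ ∈ K.verts
      · have hconn := hK.2 c₀ hcK
        have hu2 : u ∈ (K.deleteVerts {c₀}).verts := by
          rw [SimpleGraph.Subgraph.deleteVerts_verts]; exact ⟨hu, by simp [huc]⟩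
        have hz2 : z₀ ∈ (K.deleteVerts {c₀}).verts := by
          rw [SimpleGraph.Subgraph.deleteVerts_verts]; exact ⟨hle.1 hz₀B, by simp [hz₀c]⟩
        have hr : (K.deleteVerts {c₀}).coe.Reachable ⟨u, hu2⟩ ⟨z₀, hz2⟩ :=
          hconn.coe.preconnected _ _
        have hstep : ∀ x y : ↥(K.deleteVerts {c₀}).verts,
            (K.deleteVerts {c₀}).coe.Adj x y → ((x : V) ∈ A ↔ (y : V) ∈ A) := by
          intro x y hxy
          have := SimpleGraph.Subgraph.deleteVerts_adj.1 hxy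
          exact hA _ _ (K.adj_sub this.2.2.2.2) (by simpa using this.2.1)
            (by simpa using this.2.2.2.1)
        exact (reach_pred _ hstep hr).2 hz₀A
      · have hr : K.coe.Reachable ⟨u, hu⟩ ⟨z₀, hle.1 hz₀B⟩ := hK.1.coe.preconnected _ _
        have hstep : ∀ x y : ↥K.verts, K.coe.Adj x y → ((x : V) ∈ A ↔ (y : V) ∈ A) := by
          intro x y hxy
          exact hA _ _ (K.adj_sub hxy) (fun h => hcK (h ▸ x.2)) (fun h => hcK (h ▸ y.2))
        exact (reach_pred _ hstep hr).2 hz₀A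
    set K₁ : (restrictG G A).Subgraph :=
      ⟨K.verts, K.Adj, fun h => ⟨K.adj_sub h, hKA (K.edge_vert h), hKA (K.edge_vert h.symm)⟩,
        K.edge_vert, K.symm⟩ with hK₁
    have hK₁2vc : TwoVertexConnected K₁ := by
      obtain ⟨h1, h2⟩ := hK
      constructor
      · rw [SimpleGraph.Subgraph.connected_iff'] at h1 ⊢
        exact h1
      · intro v hv
        have := h2 v hv
        rw [SimpleGraph.Subgraph.connected_iff'] at this ⊢
        exact this
    have hBK₁ : B ≤ K₁ := ⟨hle.1, hle.2⟩
    have hK₁B : K₁ = B := hB.2 K₁ hK₁2vc hBK₁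
    have hv := congrArg SimpleGraph.Subgraph.verts hK₁B
    have ha := congrArg SimpleGraph.Subgraph.Adj hK₁B
    exact SimpleGraph.Subgraph.ext hv ha
  rcases hblocks B' hBblock with h | h
  · exact Or.inl h
  · obtain ⟨a, b, c, h1, h2, h3, h4, h5, h6, h7⟩ := h
    exact Or.inr ⟨a, b, c, h1, h2, h3, h4, h5, h6, h7⟩
end Restrict
section Separation
variable {V : Type*} {G : SimpleGraph V}

lemma exists_separation (hedge : ∃ x y, G.Adj x y)
    (hn2vc : ¬ TwoVertexConnected (suppSubgraph G)) :
    ∃ (c₀ : V) (S : Set V), c₀ ∉ S ∧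
      (∀ x y, G.Adj x y → x ≠ c₀ → y ≠ c₀ → (x ∈ S ↔ y ∈ S)) ∧
      (∃ x y, G.Adj x y ∧ x ∈ S) ∧
      (∃ x y, G.Adj x y ∧ x ∉ S ∧ x ≠ c₀) := by
  classical
  set H := suppSubgraph G with hH
  by_cases hconn : H.Connected
  · -- there is a cut vertex
    obtain ⟨v, hv, hnc⟩ : ∃ v ∈ H.verts, ¬ (H.deleteVerts {v}).Connected := by
      by_contra hall
      push_neg at hall
      exact hn2vc ⟨hconn, hall⟩
    set H' := H.deleteVerts {v} with hH'
    have hvertsH' : H'.verts = H.verts \ {v} := SimpleGraph.Subgraph.deleteVerts_verts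
    have hne' : H'.verts.Nonempty := by
      obtain ⟨x, y, hxy⟩ := hedge
      by_cases hx : x = v
      · refine ⟨y, ?_⟩
        rw [hvertsH']
        exact ⟨⟨x, hxy.symm⟩, fun hmem =>
          hxy.ne (hx.trans (Set.mem_singleton_iff.1 hmem).symm)⟩
      · refine ⟨x, ?_⟩
        rw [hvertsH']
        exact ⟨⟨y, hxy⟩, by simp [hx]⟩
    have hnpre : ¬ ∀ u v : ↥H'.verts, H'.coe.Reachable u v := by
      intro hpre
      exact hnc ⟨(SimpleGraph.connected_iff _).2 ⟨hpre, Set.nonempty_coe_sort.2 hne'⟩⟩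
    push_neg at hnpre
    obtain ⟨x₀, y₀, hnr⟩ := hnpre
    refine ⟨v, {z | ∃ h : z ∈ H'.verts, H'.coe.Reachable x₀ ⟨z, h⟩}, ?_, ?_, ?_, ?_⟩
    · rintro ⟨h, _⟩
      rw [hvertsH'] at h
      exact h.2 rfl
    · intro p q hpq hp hq
      have hadj' : H'.Adj p q := by
        refine SimpleGraph.Subgraph.deleteVerts_adj.2 ⟨⟨q, hpq⟩, by simp [hp], ⟨p, hpq.symm⟩,
          by simp [hq], hpq⟩
      constructor
      · rintro ⟨hpm, hr⟩
        exact ⟨H'.edge_vert hadj'.symm, hr.trans (SimpleGraph.Adj.reachable hadj')⟩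
      · rintro ⟨hqm, hr⟩
        exact ⟨H'.edge_vert hadj', hr.trans (SimpleGraph.Adj.reachable hadj'.symm)⟩
    · refine ⟨(x₀ : V), ?_⟩
      have hx₀ : (x₀ : V) ∈ H.verts := x₀.2.1
      obtain ⟨w, hw⟩ := hx₀
      exact ⟨w, hw, ⟨x₀.2, by exact SimpleGraph.Reachable.refl _⟩⟩
    · refine ⟨(y₀ : V), ?_⟩
      have hy₀ : (y₀ : V) ∈ H.verts := y₀.2.1
      obtain ⟨w, hw⟩ := hy₀
      refine ⟨w, hw, ?_, ?_⟩
      · rintro ⟨h, hr⟩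
        exact hnr (hr.trans (SimpleGraph.Reachable.refl _))
      · have h2 := y₀.2.2
        simpa using h2
  · -- H disconnected
    have hnev : H.verts.Nonempty := by
      obtain ⟨x, y, hxy⟩ := hedge; exact ⟨x, y, hxy⟩
    have hnpre : ¬ ∀ u v : ↥H.verts, H.coe.Reachable u v := by
      intro hpre
      exact hconn ⟨(SimpleGraph.connected_iff _).2 ⟨hpre, Set.nonempty_coe_sort.2 hnev⟩⟩
    push_neg at hnpre
    obtain ⟨x₀, y₀, hnr⟩ := hnpre
    refine ⟨(y₀ : V), {z | ∃ h : z ∈ H.verts, H.coe.Reachable x₀ ⟨z, h⟩}, ?_, ?_, ?_, ?_⟩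
    · rintro ⟨h, hr⟩
      exact hnr (hr.trans (SimpleGraph.Reachable.refl _))
    · intro p q hpq _ _
      have hadj' : H.Adj p q := hpq
      constructor
      · rintro ⟨hpm, hr⟩
        exact ⟨H.edge_vert hadj'.symm, hr.trans (SimpleGraph.Adj.reachable hadj')⟩
      · rintro ⟨hqm, hr⟩
        exact ⟨H.edge_vert hadj', hr.trans (SimpleGraph.Adj.reachable hadj'.symm)⟩
    · obtain ⟨w, hw⟩ := x₀.2
      exact ⟨(x₀ : V), w, hw, ⟨x₀.2, SimpleGraph.Reachable.refl _⟩⟩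
    · obtain ⟨w, hw⟩ := y₀.2
      refine ⟨w, (y₀ : V), hw.symm, ?_, SimpleGraph.Adj.ne hw.symm⟩
      rintro ⟨h, hr⟩
      have : H.Adj w (y₀ : V) := hw.symm
      exact hnr ((hr.trans (SimpleGraph.Adj.reachable this)).trans
        (SimpleGraph.Reachable.refl _))
end Separation
section Main
variable {V : Type*}

lemma edgeSet_restrictG_subset (G : SimpleGraph V) (A : Set V) :
    (restrictG G A).edgeSet ⊆ G.edgeSet := by
  intro e
  induction e using Sym2.ind with
  | _ x y =>
    rw [SimpleGraph.mem_edgeSet, SimpleGraph.mem_edgeSet]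
    exact fun h => h.1

theorem scOrientable_of_blocks_bipartite_or_triangle'
    [Fintype V] (G : SimpleGraph V)
    (hblocks : ∀ H : G.Subgraph, IsBlock H →
      (H.coe.Colorable 2 ∨ IsTriangleSubgraph H)) :
    SCOrientable G := by
  classical
  suffices h : ∀ (n : ℕ) (G : SimpleGraph V), G.edgeSet.ncard ≤ n →
      (∀ H : G.Subgraph, IsBlock H → (H.coe.Colorable 2 ∨ IsTriangleSubgraph H)) →
      SCOrientable G from h G.edgeSet.ncard G le_rfl hblocks
  intro n
  induction n with
  | zero =>
    intro G hcard _
    refine sc_of_edgeless G (fun x y h => ?_)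
    have he : s(x, y) ∈ G.edgeSet := G.mem_edgeSet.2 h
    have hempty : G.edgeSet = ∅ :=
      (Set.ncard_eq_zero (G.edgeSet.toFinite)).1 (Nat.le_zero.1 hcard)
    rw [hempty] at he
    exact he
  | succ n ih =>
    intro G hcard hbl
    by_cases hedge : ∃ x y, G.Adj x y
    swap
    · push_neg at hedge
      exact sc_of_edgeless G hedge
    by_cases h2vc : TwoVertexConnected (suppSubgraph G)
    · exact sc_of_suppSubgraph_2vc h2vc (hbl _ (isBlock_suppSubgraph h2vc))
    obtain ⟨c₀, S, hc₀S, hpres, ⟨e1x, e1y, he1, he1S⟩, ⟨e2x, e2y, he2, he2S, he2c⟩⟩ :=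
      exists_separation hedge h2vc
    set A₁ : Set V := S ∪ {c₀} with hA₁def
    set A₂ : Set V := Sᶜ with hA₂def
    have hc₀A₁ : c₀ ∈ A₁ := Or.inr rfl
    have hc₀A₂ : c₀ ∈ A₂ := hc₀S
    have hA₁ : ∀ x y, G.Adj x y → x ≠ c₀ → y ≠ c₀ → (x ∈ A₁ ↔ y ∈ A₁) := by
      intro x y h hx hy
      have := hpres x y h hx hy
      simp only [hA₁def, Set.mem_union, Set.mem_singleton_iff]
      constructor
      · rintro (h' | h')
        · exact Or.inl (this.1 h')
        · exact absurd h' hx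
      · rintro (h' | h')
        · exact Or.inl (this.2 h')
        · exact absurd h' hy
    have hA₂ : ∀ x y, G.Adj x y → x ≠ c₀ → y ≠ c₀ → (x ∈ A₂ ↔ y ∈ A₂) := by
      intro x y h hx hy
      have := hpres x y h hx hy
      simp only [hA₂def, Set.mem_compl_iff]
      exact not_congr this
    have hmemA : ∀ x, x ∈ A₁ → x ∈ A₂ → x = c₀ := by
      intro x h1 h2
      rcases h1 with h1 | h1
      · exact absurd h1 h2
      · exact h1
    -- every edge of G is an edge of exactly one restriction
    have hcover : ∀ x y, G.Adj x y → (restrictG G A₁).Adj x y ∨ (restrictG G A₂).Adj x y := by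
      intro x y h
      by_cases hx : x = c₀
      · obtain rfl := hx.symm
        have hy : y ≠ c₀ := h.ne'
        by_cases hyS : y ∈ S
        · exact Or.inl ⟨h, hc₀A₁, Or.inl hyS⟩
        · exact Or.inr ⟨h, hc₀A₂, hyS⟩
      by_cases hy : y = c₀
      · obtain rfl := hy.symm
        by_cases hxS : x ∈ S
        · exact Or.inl ⟨h, Or.inl hxS, hc₀A₁⟩
        · exact Or.inr ⟨h, hxS, hc₀A₂⟩
      by_cases hxS : x ∈ S
      · exact Or.inl ⟨h, Or.inl hxS, Or.inl ((hpres x y h hx hy).1 hxS)⟩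
      · exact Or.inr ⟨h, hxS, fun hyS => hxS ((hpres x y h hx hy).2 hyS)⟩
    -- strict edge count decrease
    have hstrict₁ : (restrictG G A₁).edgeSet ⊂ G.edgeSet := by
      refine ⟨edgeSet_restrictG_subset G A₁, fun hsub => ?_⟩
      have := hsub (G.mem_edgeSet.2 he2)
      rw [SimpleGraph.mem_edgeSet] at this
      rcases this.2.1 with h | h
      · exact he2S h
      · exact he2c h
    have hstrict₂ : (restrictG G A₂).edgeSet ⊂ G.edgeSet := by
      refine ⟨edgeSet_restrictG_subset G A₂, fun hsub => ?_⟩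
      have := hsub (G.mem_edgeSet.2 he1)
      rw [SimpleGraph.mem_edgeSet] at this
      exact this.2.1 he1S
    have hcard₁ : (restrictG G A₁).edgeSet.ncard ≤ n := by
      have := Set.ncard_lt_ncard hstrict₁ (G.edgeSet.toFinite)
      omega
    have hcard₂ : (restrictG G A₂).edgeSet.ncard ≤ n := by
      have := Set.ncard_lt_ncard hstrict₂ (G.edgeSet.toFinite)
      omega
    obtain ⟨σ₁, hσ₁⟩ := ih (restrictG G A₁) hcard₁ (blocks_restrict hc₀A₁ hA₁ hbl)
    obtain ⟨σ₂, hσ₂⟩ := ih (restrictG G A₂) hcard₂ (blocks_restrict hc₀A₂ hA₂ hbl)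
    have harc₁ : ∀ x y, σ₁.arc x y → (restrictG G A₁).Adj x y :=
      fun x y h => (σ₁.adj_iff x y).2 (Or.inl h)
    have harc₂ : ∀ x y, σ₂.arc x y → (restrictG G A₂).Adj x y :=
      fun x y h => (σ₂.adj_iff x y).2 (Or.inl h)
    refine ⟨⟨fun x y => σ₁.arc x y ∨ σ₂.arc x y, ?_, ?_⟩, ?_⟩
    · intro u v
      constructor
      · intro h
        rcases hcover u v h with h1 | h2
        · rcases (σ₁.adj_iff u v).1 h1 with h' | h'
          · exact Or.inl (Or.inl h')
          · exact Or.inr (Or.inl h')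
        · rcases (σ₂.adj_iff u v).1 h2 with h' | h'
          · exact Or.inl (Or.inr h')
          · exact Or.inr (Or.inr h')
      · rintro ((h | h) | (h | h))
        · exact (harc₁ _ _ h).1
        · exact (harc₂ _ _ h).1
        · exact ((harc₁ _ _ h).1).symm
        · exact ((harc₂ _ _ h).1).symm
    · rintro u v (h1 | h1) (h2 | h2)
      · exact σ₁.asymm u v h1 h2
      · have ha := harc₁ _ _ h1
        have hb := harc₂ _ _ h2
        have hu : u = c₀ := hmemA u ha.2.1 hb.2.2
        have hv : v = c₀ := hmemA v ha.2.2 hb.2.1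
        exact ha.1.ne (hu.trans hv.symm)
      · have ha := harc₂ _ _ h1
        have hb := harc₁ _ _ h2
        have hu : u = c₀ := hmemA u hb.2.2 ha.2.1
        have hv : v = c₀ := hmemA v hb.2.1 ha.2.2
        exact ha.1.ne (hu.trans hv.symm)
      · exact σ₂.asymm u v h1 h2
    · refine glue_sc (c := c₀) hσ₁ hσ₂ (fun x hx1 hx2 => ?_)
      obtain ⟨y1, hy1⟩ := hx1
      obtain ⟨y2, hy2⟩ := hx2
      have hxA₁ : x ∈ A₁ := by
        rcases hy1 with h | h
        · exact (harc₁ _ _ h).2.1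
        · exact (harc₁ _ _ h).2.2
      have hxA₂ : x ∈ A₂ := by
        rcases hy2 with h | h
        · exact (harc₂ _ _ h).2.1
        · exact (harc₂ _ _ h).2.2
      exact hmemA x hxA₁ hxA₂
end Main

/-- If every block (maximal 2-vertex-connected subgraph) of a finite graph `G`
is bipartite or a triangle, then `G` is sc-orientable. -/
theorem scOrientable_of_blocks_bipartite_or_triangle
    {V : Type*} [Fintype V] (G : SimpleGraph V)
    (hblocks : ∀ H : G.Subgraph, IsBlock H →
      (H.coe.Colorable 2 ∨ IsTriangleSubgraph H)) :
    SCOrientable G :=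
  scOrientable_of_blocks_bipartite_or_triangle' G hblocks
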